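/- The independence number of the shuriken graph Shu^t_n(G) equals t + ((n−t)/2)(α(G) + 1), where α(G) is the independence number of G. -/

import Mathlib

open SimpleGraph

/-- The (t,n)-shuriken graph of `G`: vertices are `n` copies of `V(G) ∪ {z}`,
encoded as `Fin n × Option V` (`(i, some x)` is `x_{i+1}`, `(i, none)` is `z_{i+1}`).
Adjacency (symmetrized, loops removed by `fromRel`):
(1) `u_i v_j` whenever `uv ∈ E(G)` (any copies);
(2) all pairs within copy `i` for `i ≤ t` (copy made complete);
(3) all pairs between copy `i` and copy `n+t+1-i` for `t+1 ≤ i ≤ (n+t)/2`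
    (0-indexed: `i + j = n + t - 1` with `t ≤ i`). -/
def shuriken {V : Type*} (G : SimpleGraph V) (n t : ℕ) :
    SimpleGraph (Fin n × Option V) :=
  SimpleGraph.fromRel (fun p q =>
    (∃ x y, p.2 = some x ∧ q.2 = some y ∧ G.Adj x y) ∨
    (p.1 = q.1 ∧ (p.1 : ℕ) < t) ∨
    (t ≤ (p.1 : ℕ) ∧ (p.1 : ℕ) + (q.1 : ℕ) = n + t - 1))

/-- The independence number: maximum size of a set of pairwise nonadjacent vertices. -/
noncomputable def indepNum {α : Type*} (G : SimpleGraph α) : ℕ :=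
  sSup {k | ∃ s : Finset α, s.card = k ∧ ∀ a ∈ s, ∀ b ∈ s, a ≠ b → ¬ G.Adj a b}

lemma indep_card_le {α : Type*} [Fintype α] (G : SimpleGraph α)
    (s : Finset α) (hs : ∀ a ∈ s, ∀ b ∈ s, a ≠ b → ¬ G.Adj a b) :
    s.card ≤ _root_.indepNum G := by
  apply le_csSup
  · refine ⟨Fintype.card α, ?_⟩
    rintro k ⟨u, hu, -⟩
    exact hu ▸ Finset.card_le_univ u
  · exact ⟨s, rfl, hs⟩

lemma exists_max_indep {α : Type*} [Fintype α] (G : SimpleGraph α) :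
    ∃ s : Finset α, s.card = _root_.indepNum G ∧ ∀ a ∈ s, ∀ b ∈ s, a ≠ b → ¬ G.Adj a b := by
  have h : _root_.indepNum G ∈
      {k | ∃ s : Finset α, s.card = k ∧ ∀ a ∈ s, ∀ b ∈ s, a ≠ b → ¬ G.Adj a b} := by
    apply Nat.sSup_mem
    · exact ⟨0, ∅, by simp⟩
    · refine ⟨Fintype.card α, ?_⟩
      rintro k ⟨u, hu, -⟩
      exact hu ▸ Finset.card_le_univ u
  obtain ⟨s, h1, h2⟩ := h
  exact ⟨s, h1, h2⟩

lemma card_filter_fin (n a b : ℕ) (hb : b ≤ n) :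
    (Finset.univ.filter (fun i : Fin n => a ≤ (i : ℕ) ∧ (i : ℕ) < b)).card = b - a := by
  classical
  rw [← Nat.card_Ico a b, ← Finset.card_image_of_injective _ Fin.val_injective]
  congr 1
  ext j
  simp only [Finset.mem_image, Finset.mem_filter, Finset.mem_univ, true_and, Finset.mem_Ico]
  constructor
  · rintro ⟨i, ⟨h1, h2⟩, rfl⟩; exact ⟨h1, h2⟩
  · rintro ⟨h1, h2⟩; exact ⟨⟨j, lt_of_lt_of_le h2 hb⟩, ⟨h1, h2⟩, rfl⟩

theorem shuriken_indepNum {V : Type*} [Fintype V] (G : SimpleGraph V)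
    (n t : ℕ) (ht : 1 ≤ t) (htn : t ≤ n) (hev : Even (n - t)) :
    _root_.indepNum (shuriken G n t) = t + ((n - t) / 2) * (_root_.indepNum G + 1) := by
  classical
  obtain ⟨m, hm0⟩ := hev
  have hm : n = t + (m + m) := by omega
  have hdiv : (n - t) / 2 = m := by omega
  obtain ⟨S, hScard, hSindep⟩ := exists_max_indep G
  set R : (Fin n × Option V) → (Fin n × Option V) → Prop := fun p q =>
    (∃ x y, p.2 = some x ∧ q.2 = some y ∧ G.Adj x y) ∨
    (p.1 = q.1 ∧ (p.1 : ℕ) < t) ∨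
    (t ≤ (p.1 : ℕ) ∧ (p.1 : ℕ) + (q.1 : ℕ) = n + t - 1) with hRdef
  have hadj : ∀ p q, (shuriken G n t).Adj p q ↔ p ≠ q ∧ (R p q ∨ R q p) := by
    intro p q
    rw [shuriken, SimpleGraph.fromRel_adj]
  rw [hdiv]
  apply le_antisymm
  · -- upper bound
    refine csSup_le ⟨0, ∅, by simp⟩ ?_
    rintro k ⟨A, rfl, hA⟩
    have hAnadj : ∀ p ∈ A, ∀ q ∈ A, p ≠ q → ¬ R p q := by
      intro p hp q hq hne hR'
      exact hA p hp q hq hne ((hadj p q).2 ⟨hne, Or.inl hR'⟩)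
    set blk : Fin n × Option V → ℕ := fun p =>
      if (p.1 : ℕ) < t then (p.1 : ℕ) else min (p.1 : ℕ) (n + t - 1 - (p.1 : ℕ)) with hblk
    have hblkmem : ∀ p ∈ A, blk p ∈ Finset.range (t + m) := by
      intro p _
      have := p.1.isLt
      simp only [hblk, Finset.mem_range]
      split <;> omega
    rw [Finset.card_eq_sum_card_fiberwise hblkmem]
    have hbound : ∀ b ∈ Finset.range (t + m),
        (A.filter fun p => blk p = b).card ≤ if b < t then 1 else _root_.indepNum G + 1 := by
      intro b hb
      rw [Finset.mem_range] at hb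
      by_cases hbt : b < t
      · -- complete copy b: at most one vertex
        rw [if_pos hbt]
        apply Finset.card_le_one.2
        intro p hp q hq
        rw [Finset.mem_filter] at hp hq
        have hp1 : (p.1 : ℕ) = b := by
          have h := hp.2
          have := p.1.isLt
          simp only [hblk] at h
          split at h <;> omega
        have hq1 : (q.1 : ℕ) = b := by
          have h := hq.2
          have := q.1.isLt
          simp only [hblk] at h
          split at h <;> omega
        by_contra hne
        exact hAnadj p hp.1 q hq.1 hne
          (Or.inr (Or.inl ⟨Fin.ext (hp1.trans hq1.symm), hp1 ▸ hbt⟩))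
      · -- a joined pair of copies
        rw [if_neg hbt]
        push_neg at hbt
        have hfst : ∀ p ∈ A.filter (fun p => blk p = b),
            t ≤ (p.1 : ℕ) ∧ ((p.1 : ℕ) = b ∨ (p.1 : ℕ) = n + t - 1 - b) := by
          intro p hp
          rw [Finset.mem_filter] at hp
          have h := hp.2
          have := p.1.isLt
          simp only [hblk] at h
          split at h <;> omega
        have hinj : Set.InjOn (Prod.snd : Fin n × Option V → Option V)
            (↑(A.filter (fun p => blk p = b)) : Set (Fin n × Option V)) := by
          intro p hp q hq hpq
          simp only [Finset.coe_filter, Set.mem_setOf_eq] at hp hq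
          by_contra hne
          have h1 := hfst p (Finset.mem_filter.2 ⟨hp.1, hp.2⟩)
          have h2 := hfst q (Finset.mem_filter.2 ⟨hq.1, hq.2⟩)
          have hne1 : (p.1 : ℕ) ≠ (q.1 : ℕ) := by
            intro h
            exact hne (Prod.ext (Fin.ext h) hpq)
          have hsum : (p.1 : ℕ) + (q.1 : ℕ) = n + t - 1 := by omega
          exact hAnadj p hp.1 q hq.1 hne (Or.inr (Or.inr ⟨h1.1, hsum⟩))
        rw [← Finset.card_image_of_injOn hinj]
        set T := (A.filter (fun p => blk p = b)).image Prod.snd with hT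
        have hsub : T ⊆ insert none ((T.eraseNone).image some) := by
          intro o ho
          match o with
          | none => exact Finset.mem_insert_self _ _
          | some x =>
            exact Finset.mem_insert_of_mem
              (Finset.mem_image_of_mem some (Finset.mem_eraseNone.2 ho))
        calc T.card ≤ (insert none ((T.eraseNone).image some)).card :=
              Finset.card_le_card hsub
          _ ≤ ((T.eraseNone).image some).card + 1 := Finset.card_insert_le _ _
          _ ≤ T.eraseNone.card + 1 := by
              exact Nat.add_le_add_right (Finset.card_image_le) 1
          _ ≤ _root_.indepNum G + 1 := by
              refine Nat.add_le_add_right ?_ 1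
              apply indep_card_le
              intro x hx y hy hxy hGxy
              rw [Finset.mem_eraseNone, hT, Finset.mem_image] at hx hy
              obtain ⟨p, hp, hpx⟩ := hx
              obtain ⟨q, hq, hqy⟩ := hy
              rw [Finset.mem_filter] at hp hq
              have hne : p ≠ q := by
                intro h
                rw [h, hqy] at hpx
                exact hxy (Option.some_injective _ hpx.symm)
              exact hAnadj p hp.1 q hq.1 hne
                (Or.inl ⟨x, y, hpx, hqy, hGxy⟩)
    calc ∑ b ∈ Finset.range (t + m), (A.filter fun p => blk p = b).card
        ≤ ∑ b ∈ Finset.range (t + m), if b < t then 1 else _root_.indepNum G + 1 :=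
          Finset.sum_le_sum hbound
      _ = t + m * (_root_.indepNum G + 1) := by
          rw [Finset.range_eq_Ico,
            ← Finset.sum_Ico_consecutive _ (Nat.zero_le t) (Nat.le_add_right t m)]
          have e1 : ∑ b ∈ Finset.Ico 0 t, (if b < t then 1 else _root_.indepNum G + 1) = t := by
            rw [Finset.sum_congr rfl (fun b hb => if_pos (Finset.mem_Ico.1 hb).2)]
            simp
          have e2 : ∑ b ∈ Finset.Ico t (t + m), (if b < t then 1 else _root_.indepNum G + 1)
              = m * (_root_.indepNum G + 1) := by
            rw [Finset.sum_congr rfl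
              (fun b hb => if_neg (Nat.not_lt.2 (Finset.mem_Ico.1 hb).1))]
            simp [Nat.card_Ico, mul_comm]
          rw [e1, e2]
  · -- lower bound
    set A : Finset (Fin n × Option V) :=
      ((Finset.univ.filter (fun i : Fin n => 0 ≤ (i : ℕ) ∧ (i : ℕ) < t)) ×ˢ {none}) ∪
      ((Finset.univ.filter (fun i : Fin n => t ≤ (i : ℕ) ∧ (i : ℕ) < t + m)) ×ˢ
        insert none (S.image some)) with hAdef
    have hmemA : ∀ p : Fin n × Option V, p ∈ A ↔
        ((p.1 : ℕ) < t ∧ p.2 = none) ∨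
        ((t ≤ (p.1 : ℕ) ∧ (p.1 : ℕ) < t + m) ∧
          (p.2 = none ∨ ∃ x ∈ S, p.2 = some x)) := by
      intro p
      simp only [hAdef, Finset.mem_union, Finset.mem_product, Finset.mem_filter,
        Finset.mem_univ, true_and, Finset.mem_singleton, Finset.mem_insert,
        Finset.mem_image]
      constructor
      · rintro (⟨⟨-, h1⟩, h2⟩ | ⟨h1, h2⟩)
        · exact Or.inl ⟨h1, h2⟩
        · refine Or.inr ⟨h1, ?_⟩
          rcases h2 with h | ⟨x, hx, hxe⟩
          · exact Or.inl h
          · exact Or.inr ⟨x, hx, hxe.symm⟩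
      · rintro (⟨h1, h2⟩ | ⟨h1, h2⟩)
        · exact Or.inl ⟨⟨Nat.zero_le _, h1⟩, h2⟩
        · refine Or.inr ⟨h1, ?_⟩
          rcases h2 with h | ⟨x, hx, hxe⟩
          · exact Or.inl h
          · exact Or.inr ⟨x, hx, hxe.symm⟩
    have hkey : ∀ p ∈ A, ∀ q ∈ A, p ≠ q → ¬ R p q := by
      intro p hp q hq hne hR'
      rw [hmemA] at hp hq
      rcases hR' with ⟨x, y, hpx, hqy, hGxy⟩ | ⟨h1, h2⟩ | ⟨h1, h2⟩
      · -- both some: S independence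
        have hxS : x ∈ S := by
          rcases hp with ⟨-, h⟩ | ⟨-, h | ⟨x', hx', he⟩⟩
          · simp [h] at hpx
          · simp [h] at hpx
          · rw [he] at hpx; rwa [Option.some_injective _ hpx] at hx'
        have hyS : y ∈ S := by
          rcases hq with ⟨-, h⟩ | ⟨-, h | ⟨y', hy', he⟩⟩
          · simp [h] at hqy
          · simp [h] at hqy
          · rw [he] at hqy; rwa [Option.some_injective _ hqy] at hy'
        rcases eq_or_ne x y with rfl | hxy
        · exact G.loopless.irrefl x hGxy
        · exact hSindep x hxS y hyS hxy hGxy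
      · -- same complete copy: both must be z
        have hp2 : p.2 = none := by
          rcases hp with ⟨-, h⟩ | ⟨⟨h', -⟩, -⟩
          · exact h
          · omega
        have hq2 : q.2 = none := by
          rcases hq with ⟨-, h⟩ | ⟨⟨h', -⟩, -⟩
          · exact h
          · rw [← h1] at h'; omega
        exact hne (Prod.ext h1 (hp2.trans hq2.symm))
      · -- joined pair: both endpoints would be in lower halves
        have hp1 : (p.1 : ℕ) < t + m := by
          rcases hp with ⟨h, -⟩ | ⟨⟨-, h⟩, -⟩
          · omega
          · exact h
        have hq1 : (q.1 : ℕ) < t + m := by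
          rcases hq with ⟨h, -⟩ | ⟨⟨-, h⟩, -⟩
          · omega
          · exact h
        omega
    have hAindep : ∀ p ∈ A, ∀ q ∈ A, p ≠ q → ¬ (shuriken G n t).Adj p q := by
      intro p hp q hq hne hadj'
      rcases ((hadj p q).1 hadj').2 with h | h
      · exact hkey p hp q hq hne h
      · exact hkey q hq p hp hne.symm h
    have hAcard : A.card = t + m * (_root_.indepNum G + 1) := by
      rw [hAdef, Finset.card_union_of_disjoint, Finset.card_product, Finset.card_product,
        card_filter_fin n 0 t htn, card_filter_fin n t (t + m) (by omega)]
      · have hnone : (none : Option V) ∉ S.image some := by simp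
        rw [Finset.card_insert_of_notMem hnone,
          Finset.card_image_of_injective _ (Option.some_injective V), hScard]
        simp [Nat.add_comm 1]
      · rw [Finset.disjoint_left]
        rintro p hp hp'
        rw [Finset.mem_product, Finset.mem_filter] at hp hp'
        omega
    calc t + m * (_root_.indepNum G + 1) = A.card := hAcard.symm
      _ ≤ _root_.indepNum (shuriken G n t) := indep_card_le _ A hAindep
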